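/- Every induced path in a starlike graph has at most 4 vertices. -/

import Mathlib

open SimpleGraph

variable {V : Type*}

/-- The closed neighborhood of a vertex. -/
def closedNbhd (G : SimpleGraph V) (v : V) : Set V := insert v (G.neighborSet v)

/-- A vertex is simplicial if its closed neighborhood induces a complete graph. -/
def IsSimplicial (G : SimpleGraph V) (v : V) : Prop :=
  ∀ a ∈ closedNbhd G v, ∀ b ∈ closedNbhd G v, a ≠ b → G.Adj a b

/-- `Z`, the set of simplicial vertices of `G`. -/
def simplicialSet (G : SimpleGraph V) : Set V := {v | IsSimplicial G v}

/-- `N(T)`, the union of open neighborhoods of vertices of `T`. -/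
def nbhdSet (G : SimpleGraph V) (T : Set V) : Set V := ⋃ v ∈ T, G.neighborSet v

/-- An independent set of vertices. -/
def IsIndepSet' (G : SimpleGraph V) (T : Set V) : Prop :=
  ∀ u ∈ T, ∀ v ∈ T, ¬ G.Adj u v

/-- The difference `d(T) = |T| - |N(T)|` of a set of vertices. -/
noncomputable def indepDiff (G : SimpleGraph V) (T : Set V) : ℤ :=
  (T.ncard : ℤ) - ((nbhdSet G T).ncard : ℤ)

/-- The critical independence difference `d_c(G)`. -/
noncomputable def critIndepDiff (G : SimpleGraph V) : ℤ :=
  sSup {d : ℤ | ∃ T : Set V, IsIndepSet' G T ∧ d = indepDiff G T}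

/-- A walk is an induced path if it is a path and no two non-consecutive vertices
of it are adjacent. -/
def IsInducedPath (G : SimpleGraph V) {a b : V} (p : G.Walk a b) : Prop :=
  p.IsPath ∧ ∀ (i j : ℕ) (hi : i < p.support.length) (hj : j < p.support.length),
    i + 1 < j → ¬ G.Adj (p.support.get ⟨i, hi⟩) (p.support.get ⟨j, hj⟩)

/-- A set is monophonically convex if it contains every vertex of every induced path
joining two of its vertices. -/
def MonoConvex (G : SimpleGraph V) (S : Set V) : Prop :=
  ∀ ⦃a b : V⦄, a ∈ S → b ∈ S → ∀ p : G.Walk a b, IsInducedPath G p →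
    ∀ w ∈ p.support, w ∈ S

/-- The monophonic convex hull of `S`: the smallest monophonically convex set containing `S`. -/
def monoHull (G : SimpleGraph V) (S : Set V) : Set V :=
  ⋂₀ {T : Set V | S ⊆ T ∧ MonoConvex G T}

/-- A set is monophonically convexly independent if no member is in the hull
of the others. -/
def MConvexIndep (G : SimpleGraph V) (S : Set V) : Prop :=
  ∀ v ∈ S, v ∉ monoHull G (S \ {v})

/-- The monophonic rank: the largest size of an m-convexly independent set. -/
noncomputable def monoRank (G : SimpleGraph V) : ℕ :=
  sSup {n : ℕ | ∃ S : Set V, MConvexIndep G S ∧ n = S.ncard}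

/-- A starlike partition of a graph: a partition of the vertex set into cliques
`V_0, V_1, …, V_t` such that `V_0` is a maximal clique and, for `i ≥ 1`,
all vertices of `V_i` have the same closed neighborhood outside `V_i`,
contained in `V_0`. -/
structure IsStarlikePartition (G : SimpleGraph V) (t : ℕ) (Vp : Fin (t+1) → Set V) : Prop where
  nonempty : ∀ i, (Vp i).Nonempty
  disjoint : ∀ i j, i ≠ j → Disjoint (Vp i) (Vp j)
  covers : ∀ v : V, ∃ i, v ∈ Vp i
  cliques : ∀ i, G.IsClique (Vp i)
  maximal : ∀ T : Set V, G.IsClique T → Vp 0 ⊆ T → T ⊆ Vp 0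
  nbhd_eq : ∀ i : Fin (t+1), i ≠ 0 → ∀ u ∈ Vp i, ∀ v ∈ Vp i,
    closedNbhd G u \ Vp i = closedNbhd G v \ Vp i
  nbhd_sub : ∀ i : Fin (t+1), i ≠ 0 → ∀ u ∈ Vp i, closedNbhd G u \ Vp i ⊆ Vp 0

/-- `X_i`: the maximal clique containing `V_i` (`X_0 = V_0`; for `i ≥ 1` it is
the closed neighborhood of any vertex of `V_i`). -/
def Xset (G : SimpleGraph V) {t : ℕ} (Vp : Fin (t+1) → Set V) (i : Fin (t+1)) : Set V :=
  if i = 0 then Vp 0 else ⋃ u ∈ Vp i, closedNbhd G u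

/-- `C_i = X_i ∩ Z`. -/
def Cset (G : SimpleGraph V) {t : ℕ} (Vp : Fin (t+1) → Set V) (i : Fin (t+1)) : Set V :=
  Xset G Vp i ∩ simplicialSet G

/-- `C'_i = X_i − C_i`. -/
def Cset' (G : SimpleGraph V) {t : ℕ} (Vp : Fin (t+1) → Set V) (i : Fin (t+1)) : Set V :=
  Xset G Vp i \ Cset G Vp i

/-- `Y_i`: the union of the sets `C_j`, over `j ≠ i` with `C'_j ⊆ C'_i`. -/
def Yset (G : SimpleGraph V) {t : ℕ} (Vp : Fin (t+1) → Set V) (i : Fin (t+1)) : Set V :=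
  ⋃ j ∈ {j : Fin (t+1) | j ≠ i ∧ Cset' G Vp j ⊆ Cset' G Vp i}, Cset G Vp j

open scoped Classical in
/-- The vertex set of the split graph `G_i`: if `|N(Y_i) − Y_i| = |C'_i| − 1` and
`|Y_i| ≥ |C'_i| − 1` then `(C'_i − {x}) ∪ Y_i` where `{x} = C'_i − N(Y_i)`
(so that `C'_i − {x} = C'_i ∩ N(Y_i)`), otherwise `C'_i ∪ Y_i`. -/
noncomputable def Wset (G : SimpleGraph V) {t : ℕ} (Vp : Fin (t+1) → Set V)
    (i : Fin (t+1)) : Set V :=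
  if (((nbhdSet G (Yset G Vp i) \ Yset G Vp i).ncard : ℤ) = ((Cset' G Vp i).ncard : ℤ) - 1
      ∧ ((Yset G Vp i).ncard : ℤ) ≥ ((Cset' G Vp i).ncard : ℤ) - 1)
  then (Cset' G Vp i ∩ nbhdSet G (Yset G Vp i)) ∪ Yset G Vp i
  else Cset' G Vp i ∪ Yset G Vp i

/-- The induced subgraph on `W` with all edges inside `Y` deleted. -/
def inducedMinusY (G : SimpleGraph V) (W Y : Set V) : SimpleGraph ↥W where
  Adj a b := G.Adj a b ∧ ¬((a : V) ∈ Y ∧ (b : V) ∈ Y)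
  symm := by
    refine ⟨?_⟩
    intro a b h
    exact ⟨h.1.symm, fun hc => h.2 ⟨hc.2, hc.1⟩⟩
  loopless := by
    refine ⟨?_⟩
    intro a h
    exact G.irrefl h.1

/-- The split graph `G_i = G[W_i] − E(G[Y_i])`. -/
noncomputable def Gsplit (G : SimpleGraph V) {t : ℕ} (Vp : Fin (t+1) → Set V)
    (i : Fin (t+1)) : SimpleGraph ↥(Wset G Vp i) :=
  inducedMinusY G (Wset G Vp i) (Yset G Vp i)

lemma support_get_eq_getVert {G : SimpleGraph V} {a b : V} (p : G.Walk a b) :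
    ∀ (i : ℕ) (hi : i < p.support.length), p.support.get ⟨i, hi⟩ = p.getVert i := by
  induction p with
  | nil =>
    intro i hi
    simp only [Walk.support_nil, List.length_singleton] at hi
    interval_cases i
    rfl
  | cons h q ih =>
    intro i hi
    cases i with
    | zero => rfl
    | succ j =>
      rw [Walk.getVert_cons_succ]
      simp only [Walk.support_cons, List.get_cons_succ]
      exact ih j (by simpa [Walk.support_cons, Nat.succ_lt_succ_iff] using hi)

lemma no_five_path (G : SimpleGraph V) (t : ℕ) (Vp : Fin (t+1) → Set V)
    (hstar : IsStarlikePartition G t Vp)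
    (x0 x1 x2 x3 x4 : V)
    (a01 : G.Adj x0 x1) (a12 : G.Adj x1 x2) (a23 : G.Adj x2 x3) (a34 : G.Adj x3 x4)
    (n02 : ¬G.Adj x0 x2) (n03 : ¬G.Adj x0 x3)
    (n13 : ¬G.Adj x1 x3) (n14 : ¬G.Adj x1 x4) (n24 : ¬G.Adj x2 x4)
    (d02 : x0 ≠ x2) (d03 : x0 ≠ x3) (d13 : x1 ≠ x3) (d14 : x1 ≠ x4)
    (d24 : x2 ≠ x4) : False := by
  have memu : ∀ {w : V} {i j : Fin (t+1)}, w ∈ Vp i → w ∈ Vp j → i = j := by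
    intro w i j hi hj
    by_contra h
    exact Set.disjoint_left.mp (hstar.disjoint i j h) hi hj
  have cliqueAdj : ∀ {i : Fin (t+1)} {w w' : V}, w ∈ Vp i → w' ∈ Vp i → w ≠ w' →
      G.Adj w w' := fun hw hw' hne => hstar.cliques _ hw hw' hne
  have nbr : ∀ {i : Fin (t+1)} {u w : V}, i ≠ 0 → u ∈ Vp i → G.Adj u w → w ∉ Vp i →
      w ∈ Vp 0 := by
    intro i u w hi hu ha hw
    exact hstar.nbhd_sub i hi u hu ⟨Set.mem_insert_of_mem _ ha, hw⟩
  have same : ∀ {i : Fin (t+1)} {u u' w : V}, i ≠ 0 → u ∈ Vp i → u' ∈ Vp i →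
      G.Adj u w → w ∉ Vp i → (w = u' ∨ G.Adj u' w) := by
    intro i u u' w hi hu hu' ha hw
    have heq := hstar.nbhd_eq i hi u hu u' hu'
    have hin : w ∈ closedNbhd G u \ Vp i := ⟨Set.mem_insert_of_mem _ ha, hw⟩
    rw [heq] at hin
    rcases Set.mem_insert_iff.mp hin.1 with h | h
    · exact Or.inl h
    · exact Or.inr h
  obtain ⟨j0, m0⟩ := hstar.covers x0
  obtain ⟨j1, m1⟩ := hstar.covers x1
  obtain ⟨j2, m2⟩ := hstar.covers x2
  obtain ⟨j3, m3⟩ := hstar.covers x3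
  obtain ⟨j4, m4⟩ := hstar.covers x4
  by_cases h2 : j2 = 0
  · -- x2 ∈ V_0
    subst h2
    by_cases h1 : j1 = 0
    · -- x1 ∈ V_0, so x3 ∉ V_0
      subst h1
      have h3 : j3 ≠ 0 := by
        intro h; subst h; exact n13 (cliqueAdj m1 m3 d13)
      by_cases h4 : j4 = j3
      · -- x4 ∈ V_{j3}: same closed nbhd as x3 outside V_{j3}
        subst h4
        have hx2 : x2 ∉ Vp j4 := fun h => h3 (memu m2 h).symm
        rcases same h3 m3 m4 a23.symm hx2 with h | h
        · exact d24 h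
        · exact n24 h.symm
      · -- x4 ∉ V_{j3}: x4 ∈ V_0, adjacent to x2
        have hx4 : x4 ∉ Vp j3 := fun h => h4 (memu m4 h)
        have hx40 : x4 ∈ Vp 0 := nbr h3 m3 a34 hx4
        exact n24 (cliqueAdj m2 hx40 d24)
    · -- x1 ∉ V_0
      by_cases h0 : j0 = j1
      · subst h0
        have hx2 : x2 ∉ Vp j0 := fun h => h1 (memu m2 h).symm
        rcases same h1 m1 m0 a12 hx2 with h | h
        · exact d02 h.symm
        · exact n02 h
      · have hx0 : x0 ∉ Vp j1 := fun h => h0 (memu m0 h)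
        have hx00 : x0 ∈ Vp 0 := nbr h1 m1 a01.symm hx0
        exact n02 (cliqueAdj hx00 m2 d02)
  · -- x2 ∈ V_{j2}, j2 ≠ 0
    by_cases h1 : j1 = j2
    · by_cases h3 : j3 = j2
      · -- x1, x3 both in V_{j2}: clique
        exact n13 (cliqueAdj (h1 ▸ m1) (h3 ▸ m3) d13)
      · -- x3 ∈ V_0
        have hx3 : x3 ∉ Vp j2 := fun h => h3 (memu m3 h)
        have hx30 : x3 ∈ Vp 0 := nbr h2 m2 a23 hx3
        by_cases h0 : j0 = j2
        · exact n02 (cliqueAdj (h0 ▸ m0) m2 d02)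
        · have hx0 : x0 ∉ Vp j2 := fun h => h0 (memu m0 h)
          have hx00 : x0 ∈ Vp 0 := nbr h2 (h1 ▸ m1) a01.symm hx0
          exact n03 (cliqueAdj hx00 hx30 d03)
    · have hx1 : x1 ∉ Vp j2 := fun h => h1 (memu m1 h)
      have hx10 : x1 ∈ Vp 0 := nbr h2 m2 a12.symm hx1
      by_cases h3 : j3 = j2
      · -- x3 ∈ V_{j2}
        by_cases h4 : j4 = j2
        · exact n24 (cliqueAdj m2 (h4 ▸ m4) d24)
        · have hx4 : x4 ∉ Vp j2 := fun h => h4 (memu m4 h)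
          have hx40 : x4 ∈ Vp 0 := nbr h2 (h3 ▸ m3) a34 hx4
          exact n14 (cliqueAdj hx10 hx40 d14)
      · have hx3 : x3 ∉ Vp j2 := fun h => h3 (memu m3 h)
        have hx30 : x3 ∈ Vp 0 := nbr h2 m2 a23 hx3
        exact n13 (cliqueAdj hx10 hx30 d13)

/-- every induced path in a starlike graph has at most 4 vertices. -/
theorem statement9 [Fintype V] (G : SimpleGraph V) (t : ℕ) (Vp : Fin (t+1) → Set V)
    (hstar : IsStarlikePartition G t Vp)
    {a b : V} (p : G.Walk a b) (hp : IsInducedPath G p) :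
    p.support.length ≤ 4 := by
  by_contra hlen
  push_neg at hlen
  have hls : p.support.length = p.length + 1 := p.length_support
  have hlen' : 4 ≤ p.length := by omega
  have hadj : ∀ i, i < 4 → G.Adj (p.getVert i) (p.getVert (i+1)) := fun i hi =>
    p.adj_getVert_succ (lt_of_lt_of_le hi hlen')
  have hn : ∀ i j, j ≤ 4 → i + 1 < j → ¬ G.Adj (p.getVert i) (p.getVert j) := by
    intro i j hj hij
    have hi' : i < p.support.length := by omega
    have hj' : j < p.support.length := by omega
    have := hp.2 i j hi' hj' hij
    rwa [support_get_eq_getVert p i hi', support_get_eq_getVert p j hj'] at this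
  have hd : ∀ i j, j ≤ 4 → i < j → p.getVert i ≠ p.getVert j := by
    intro i j hj hij heq
    have hi' : i < p.support.length := by omega
    have hj' : j < p.support.length := by omega
    have hnd : p.support.Nodup := hp.1.support_nodup
    have : (⟨i, hi'⟩ : Fin p.support.length) = ⟨j, hj'⟩ := by
      apply List.Nodup.get_inj_iff hnd |>.mp
      rw [support_get_eq_getVert p i hi', support_get_eq_getVert p j hj', heq]
    simp only [Fin.mk.injEq] at this
    omega
  exact no_five_path G t Vp hstar (p.getVert 0) (p.getVert 1) (p.getVert 2)
    (p.getVert 3) (p.getVert 4)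
    (hadj 0 (by norm_num)) (hadj 1 (by norm_num)) (hadj 2 (by norm_num))
    (hadj 3 (by norm_num))
    (hn 0 2 (by norm_num) (by norm_num)) (hn 0 3 (by norm_num) (by norm_num))
    (hn 1 3 (by norm_num) (by norm_num)) (hn 1 4 (by norm_num) (by norm_num))
    (hn 2 4 (by norm_num) (by norm_num))
    (hd 0 2 (by norm_num) (by norm_num)) (hd 0 3 (by norm_num) (by norm_num))
    (hd 1 3 (by norm_num) (by norm_num)) (hd 1 4 (by norm_num) (by norm_num))
    (hd 2 4 (by norm_num) (by norm_num))
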